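/- Let q be a complex number with 0 < |q| < 1. Define β₀ = 0 and β_n = 1/(q;q)_{2n−1} for n ≥ 1, and define α₀ = 0, α_m = 0 whenever 3 divides m, and for n ≥ 0 set α_{3n+1} = q^{6n²+n} − q^{6n²+7n+2}, while for n ≥ 1 set α_{3n−1} = q^{6n²−n} − q^{6n²−7n+2}. Then for every integer N ≥ 0, β_N = ∑_{k=0}^{N} α_k / ((q;q)_{N−k} · (q;q)_{N+k}); that is, (α,β) is a Bailey pair relative to (1,q). -/

import Mathlib

open scoped BigOperators

noncomputable section

/-- The finite q-Pochhammer symbol `(a;q)_n = ∏_{k=0}^{n-1} (1 - a q^k)`. -/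
def pochN (a q : ℂ) (n : ℕ) : ℂ := ∏ k ∈ Finset.range n, (1 - a * q ^ k)

/-- The Bailey pair sequence α: `α_m = 0` if `3 ∣ m`,
`α_{3n+1} = q^{6n²+n} − q^{6n²+7n+2}` and `α_{3n−1} = q^{6n²−n} − q^{6n²−7n+2}`. -/
def baileyAlpha (q : ℂ) (m : ℕ) : ℂ :=
  if m % 3 = 0 then 0
  else if m % 3 = 1 then
    q ^ (6 * (m / 3) ^ 2 + m / 3) - q ^ (6 * (m / 3) ^ 2 + 7 * (m / 3) + 2)
  else
    q ^ (6 * ((m + 1) / 3) ^ 2 - (m + 1) / 3) -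
      q ^ (6 * ((m + 1) / 3) ^ 2 + 2 - 7 * ((m + 1) / 3))

/-- The Bailey pair sequence β: `β₀ = 0` and `β_n = 1/(q;q)_{2n−1}` for `n ≥ 1`. -/
def baileyBeta (q : ℂ) : ℕ → ℂ
  | 0 => 0
  | n + 1 => 1 / pochN q q (2 * (n + 1) - 1)

namespace BaileyAux

/-- `(q;q)_n`. -/
def P (q : ℂ) (n : ℕ) : ℂ := pochN q q n

lemma P_zero (q : ℂ) : P q 0 = 1 := by simp [P, pochN]

lemma P_succ (q : ℂ) (n : ℕ) : P q (n + 1) = P q n * (1 - q ^ (n + 1)) := by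
  simp [P, pochN, Finset.prod_range_succ, pow_succ']

lemma pow_ne_one (q : ℂ) (hq1 : ‖q‖ < 1) {e : ℕ} (he : 1 ≤ e) : q ^ e ≠ 1 := by
  intro h
  have h2 : ‖q‖ ^ e < 1 := pow_lt_one₀ (norm_nonneg q) hq1 (by omega)
  rw [← norm_pow, h, norm_one] at h2
  exact lt_irrefl 1 h2

lemma one_sub_pow_ne (q : ℂ) (hq1 : ‖q‖ < 1) {e : ℕ} (he : 1 ≤ e) :
    1 - q ^ e ≠ 0 := by
  intro h
  exact pow_ne_one q hq1 he (sub_eq_zero.mp h).symm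

lemma P_ne (q : ℂ) (hq1 : ‖q‖ < 1) : ∀ n, P q n ≠ 0
  | 0 => by rw [P_zero]; exact one_ne_zero
  | (n+1) => by
      rw [P_succ]
      exact mul_ne_zero (P_ne q hq1 n) (one_sub_pow_ne q hq1 (by omega))

/-- Gaussian binomial coefficient `[n; j]_q`, as a complex number, zero outside range. -/
def Qb (q : ℂ) (n : ℕ) (j : ℤ) : ℂ :=
  if 0 ≤ j ∧ j ≤ (n : ℤ) then P q n / (P q j.toNat * P q (n - j.toNat)) else 0

lemma Qb_of_neg (q : ℂ) (n : ℕ) {j : ℤ} (h : j < 0) : Qb q n j = 0 := by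
  rw [Qb, if_neg (by omega)]

lemma Qb_of_gt (q : ℂ) (n : ℕ) {j : ℤ} (h : (n:ℤ) < j) : Qb q n j = 0 := by
  rw [Qb, if_neg (by omega)]

lemma Qb_natCast (q : ℂ) (n jn : ℕ) (h : jn ≤ n) :
    Qb q n (jn : ℤ) = P q n / (P q jn * P q (n - jn)) := by
  rw [Qb, if_pos (by omega)]
  norm_num

lemma Qb_zero (q : ℂ) (hq1 : ‖q‖ < 1) (n : ℕ) : Qb q n 0 = 1 := by
  have h := Qb_natCast q n 0 (Nat.zero_le n)
  norm_num [P_zero] at h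
  rw [h]
  exact div_self (P_ne q hq1 n)

lemma Qb_top (q : ℂ) (hq1 : ‖q‖ < 1) (n : ℕ) : Qb q n (n : ℤ) = 1 := by
  rw [Qb_natCast q n n le_rfl, Nat.sub_self, P_zero, mul_one]
  exact div_self (P_ne q hq1 n)

lemma Qb_symm (q : ℂ) (n : ℕ) (j : ℤ) : Qb q n ((n:ℤ) - j) = Qb q n j := by
  by_cases h : 0 ≤ j ∧ j ≤ (n:ℤ)
  · rw [Qb, Qb, if_pos (by omega), if_pos h]
    rw [show ((n:ℤ) - j).toNat = n - j.toNat by omega,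
        show n - (n - j.toNat) = j.toNat by omega]
    ring
  · rw [Qb, Qb, if_neg (by omega), if_neg h]

lemma Qb_pascal (q : ℂ) (hq0 : q ≠ 0) (hq1 : ‖q‖ < 1) (n : ℕ) (j : ℤ) :
    Qb q (n+1) j = Qb q n j + q ^ ((n:ℤ) + 1 - j) * Qb q n (j-1) := by
  rcases lt_trichotomy j 0 with hj | hj | hj
  · rw [Qb_of_neg q (n+1) hj, Qb_of_neg q n hj, Qb_of_neg q n (by omega)]; ring
  · subst hj
    rw [Qb_zero q hq1, Qb_zero q hq1, Qb_of_neg q n (by norm_num)]; ring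
  · rcases lt_trichotomy ((n:ℤ)) (j-1) with hn | hn | hn
    · rw [Qb_of_gt q (n+1) (by push_cast; omega), Qb_of_gt q n (by omega),
        Qb_of_gt q n (by omega)]
      ring
    · obtain rfl : j = ((n+1:ℕ):ℤ) := by push_cast; omega
      rw [Qb_top q hq1 (n+1), Qb_of_gt q n (by push_cast; omega),
        show ((n+1:ℕ):ℤ) - 1 = ((n:ℕ):ℤ) by push_cast; ring, Qb_top q hq1 n,
        show (n:ℤ) + 1 - ((n+1:ℕ):ℤ) = 0 by push_cast; ring, zpow_zero]
      ring
    · lift j to ℕ using (by omega : (0:ℤ) ≤ j) with jn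
      have hj1 : 1 ≤ jn := by omega
      have hjn : jn ≤ n := by omega
      rw [show ((jn:ℤ) - 1) = ((jn - 1 : ℕ):ℤ) by omega]
      rw [Qb_natCast q (n+1) jn (by omega), Qb_natCast q n jn hjn,
        Qb_natCast q n (jn-1) (by omega)]
      rw [show ((n:ℤ) + 1 - (jn:ℤ)) = ((n+1-jn : ℕ):ℤ) by omega, zpow_natCast]
      rw [show n - (jn - 1) = n + 1 - jn by omega]
      have h1 : P q (n+1) = P q n * (1 - q^(n+1-jn) * q^jn) := by
        rw [P_succ, ← pow_add, show n+1-jn+jn = n+1 by omega]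
      have h2 : P q jn = P q (jn-1) * (1 - q^jn) := by
        conv_lhs => rw [show jn = (jn-1)+1 by omega, P_succ, show jn-1+1 = jn by omega]
      have h3 : P q (n+1-jn) = P q (n-jn) * (1 - q^(n+1-jn)) := by
        conv_lhs => rw [show n+1-jn = (n-jn)+1 by omega, P_succ,
          show n-jn+1 = n+1-jn by omega]
      rw [h1, h2, h3]
      have n1 := P_ne q hq1 n
      have n2 := P_ne q hq1 (jn-1)
      have n3 := P_ne q hq1 (n-jn)
      have n4 : (1:ℂ) - q^jn ≠ 0 := one_sub_pow_ne q hq1 hj1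
      have n5 : (1:ℂ) - q^(n+1-jn) ≠ 0 := one_sub_pow_ne q hq1 (by omega)
      field_simp
      ring

lemma Qb_absorb (q : ℂ) (hq0 : q ≠ 0) (hq1 : ‖q‖ < 1) (n : ℕ) (j e1 e2 : ℤ)
    (h1 : e1 = j) (h2 : e2 = (n:ℤ) - j + 1) :
    (1 - q ^ e1) * Qb q n j = (1 - q ^ e2) * Qb q n (j-1) := by
  rw [h1, h2]
  rcases lt_trichotomy j 0 with hj | hj | hj
  · rw [Qb_of_neg q n hj, Qb_of_neg q n (by omega)]; ring
  · subst hj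
    rw [Qb_of_neg q n (by norm_num : (0:ℤ) - 1 < 0), zpow_zero]; ring
  · rcases lt_trichotomy ((n:ℤ)) (j-1) with hn | hn | hn
    · rw [Qb_of_gt q n (by omega), Qb_of_gt q n (by omega)]; ring
    · rw [Qb_of_gt q n (by omega), show (n:ℤ) - j + 1 = 0 by omega, zpow_zero]; ring
    · lift j to ℕ using (by omega : (0:ℤ) ≤ j) with jn
      have hj1 : 1 ≤ jn := by omega
      have hjn : jn ≤ n := by omega
      rw [show ((jn:ℤ) - 1) = ((jn - 1 : ℕ):ℤ) by omega]
      rw [Qb_natCast q n jn hjn, Qb_natCast q n (jn-1) (by omega)]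
      rw [zpow_natCast, show ((n:ℤ) - (jn:ℤ) + 1) = ((n-jn+1 : ℕ):ℤ) by omega, zpow_natCast]
      rw [show n - (jn - 1) = n-jn+1 by omega]
      have h2 : P q jn = P q (jn-1) * (1 - q^jn) := by
        conv_lhs => rw [show jn = (jn-1)+1 by omega, P_succ, show jn-1+1 = jn by omega]
      have h3 : P q (n-jn+1) = P q (n-jn) * (1 - q^(n-jn+1)) := P_succ q (n-jn)
      rw [h2, h3]
      have n1 := P_ne q hq1 n
      have n2 := P_ne q hq1 (jn-1)
      have n3 := P_ne q hq1 (n-jn)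
      have n4 : (1:ℂ) - q^jn ≠ 0 := one_sub_pow_ne q hq1 hj1
      have n5 : (1:ℂ) - q^(n-jn+1) ≠ 0 := one_sub_pow_ne q hq1 (by omega)
      field_simp

lemma Qb_pascal2 (q : ℂ) (hq0 : q ≠ 0) (hq1 : ‖q‖ < 1) (n : ℕ)
    (j e1 e2 e3 : ℤ) (h1 : e1 = (n:ℤ)+1-j) (h2 : e2 = (n:ℤ)+2-j) (h3 : e3 = 2*(n:ℤ)+4-2*j) :
    Qb q (n+2) j = Qb q n j + (q^e1 + q^e2) * Qb q n (j-1) + q^e3 * Qb q n (j-2) := by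
  subst h1; subst h2; subst h3
  rw [show n+2 = (n+1)+1 by ring, Qb_pascal q hq0 hq1 (n+1) j,
    Qb_pascal q hq0 hq1 n j, Qb_pascal q hq0 hq1 n (j-1)]
  rw [show (((n+1:ℕ):ℤ)+1-j) = (n:ℤ)+2-j by push_cast; ring,
    show ((n:ℤ)+1-(j-1)) = (n:ℤ)+2-j by ring,
    show (j-1-1 : ℤ) = j-2 by ring]
  have hz : q^((n:ℤ)+2-j) * q^((n:ℤ)+2-j) = q^(2*(n:ℤ)+4-2*j) := by
    rw [← zpow_add₀ hq0]; congr 1; ring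
  linear_combination (Qb q n (j-2)) * hz

/-- The telescoping certificate function. -/
def Gc (q : ℂ) (N : ℕ) (m : ℤ) : ℂ :=
  q ^ (6*m^2 - 2*m + (N:ℤ)) * (1 - q ^ ((N:ℤ) + 3*m)) *
    ((1 - q ^ (2*N+2)) * Qb q (2*N) ((N:ℤ) - 3*m))

lemma zpow_mono4 (q : ℂ) (hq : q ≠ 0) (s1 s2 s3 E : ℤ) (k1 k2 k3 g : ℕ)
    (h : s1*k1 + s2*k2 + s3*k3 + g = E) :
    q ^ E = (q^s1)^k1 * (q^s2)^k2 * ((q^s3)^k3 * q^g) := by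
  have h1 : (q^s1)^k1 * (q^s2)^k2 * ((q^s3)^k3 * q^g)
      = q^(s1*(k1:ℤ)) * q^(s2*(k2:ℤ)) * (q^(s3*(k3:ℤ)) * q^((g:ℕ):ℤ)) := by
    rw [← zpow_natCast (q^s1) k1, ← zpow_mul, ← zpow_natCast (q^s2) k2, ← zpow_mul,
      ← zpow_natCast (q^s3) k3, ← zpow_mul, ← zpow_natCast q g]
  rw [h1, ← zpow_add₀ hq, ← zpow_add₀ hq, ← zpow_add₀ hq]
  congr 1
  linear_combination -h

lemma zpow_rel3 (q : ℂ) (hq : q ≠ 0) (s t E : ℤ) (k g : ℕ) (h : s*k + t + g = E) :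
    (q^s)^k * q^t * q^g = q^E := by
  have h1 : (q^s)^k * q^t * q^g = q^(s*(k:ℤ)) * q^t * q^((g:ℕ):ℤ) := by
    rw [← zpow_natCast (q^s) k, ← zpow_mul, ← zpow_natCast q g]
  rw [h1, ← zpow_add₀ hq, ← zpow_add₀ hq]
  congr 1

lemma cert (q : ℂ) (hq0 : q ≠ 0) (hq1 : ‖q‖ < 1) (N : ℕ) (m : ℤ) :
    (1 - q^(2*N)) * ((q^(6*m^2+m) - q^(6*m^2+7*m+2)) * Qb q (2*N+2) ((N:ℤ) - 3*m))
      - (1 - q^(2*N+2)) * ((q^(6*m^2+m) - q^(6*m^2+7*m+2)) * Qb q (2*N) ((N:ℤ) - 3*m - 1))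
    = Gc q N m - Gc q N (m+1) := by
  have pas := Qb_pascal2 q hq0 hq1 (2*N) ((N:ℤ) - 3*m) ((N:ℤ)+3*m+1) ((N:ℤ)+3*m+2)
    (2*(N:ℤ)+6*m+4) (by push_cast; ring) (by push_cast; ring) (by push_cast; ring)
  have ab0 := Qb_absorb q hq0 hq1 (2*N) ((N:ℤ)-3*m) ((N:ℤ)-3*m) ((N:ℤ)+3*m+1) rfl
    (by push_cast; ring)
  have ab1 := Qb_absorb q hq0 hq1 (2*N) ((N:ℤ)-3*m-1) ((N:ℤ)-3*m-1) ((N:ℤ)+3*m+2) rfl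
    (by push_cast; ring)
  have ab2 := Qb_absorb q hq0 hq1 (2*N) ((N:ℤ)-3*m-2) ((N:ℤ)-3*m-2) ((N:ℤ)+3*m+3) rfl
    (by push_cast; ring)
  rw [show (N:ℤ)-3*m-1-1 = (N:ℤ)-3*m-2 by ring] at ab1
  rw [show (N:ℤ)-3*m-2-1 = (N:ℤ)-3*m-3 by ring] at ab2
  have r1 := zpow_rel3 q hq0 m ((N:ℤ)-3*m) ((N:ℤ)) 3 0 (by push_cast; ring)
  have r2 := zpow_rel3 q hq0 m ((N:ℤ)-3*m-1) ((N:ℤ)) 3 1 (by push_cast; ring)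
  have r3 := zpow_rel3 q hq0 m ((N:ℤ)-3*m-2) ((N:ℤ)) 3 2 (by push_cast; ring)
  have e1 : q^(6*m^2+m) = (q^(m:ℤ))^3 * (q^((N:ℤ)))^0 * ((q^(3*m^2-m))^2 * q^0) :=
    zpow_mono4 q hq0 m ((N:ℤ)) (3*m^2-m) (6*m^2+m) 3 0 2 0 (by push_cast; ring)
  have e2 : q^(6*m^2+7*m+2) = (q^(m:ℤ))^9 * (q^((N:ℤ)))^0 * ((q^(3*m^2-m))^2 * q^2) :=
    zpow_mono4 q hq0 m ((N:ℤ)) (3*m^2-m) (6*m^2+7*m+2) 9 0 2 2 (by push_cast; ring)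
  have e2N : q^(2*N) = (q^((N:ℤ)))^2 := by
    rw [← zpow_natCast q (2*N), ← zpow_natCast (q^((N:ℤ))) 2, ← zpow_mul]
    congr 1; push_cast; ring
  have e2N2 : q^(2*N+2) = (q^((N:ℤ)))^2 * q^2 := by rw [pow_add, e2N]
  have eGm : q^(6*m^2 - 2*m + (N:ℤ)) = (q^(m:ℤ))^0 * (q^((N:ℤ)))^1 * ((q^(3*m^2-m))^2 * q^0) :=
    zpow_mono4 q hq0 m ((N:ℤ)) (3*m^2-m) (6*m^2-2*m+(N:ℤ)) 0 1 2 0 (by push_cast; ring)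
  have eGm1 : q^(6*(m+1)^2 - 2*(m+1) + (N:ℤ))
      = (q^(m:ℤ))^12 * (q^((N:ℤ)))^1 * ((q^(3*m^2-m))^2 * q^4) :=
    zpow_mono4 q hq0 m ((N:ℤ)) (3*m^2-m) (6*(m+1)^2-2*(m+1)+(N:ℤ)) 12 1 2 4
      (by push_cast; ring)
  have eNm : q^((N:ℤ) + 3*m) = (q^(m:ℤ))^3 * (q^((N:ℤ)))^1 * ((q^(3*m^2-m))^0 * q^0) :=
    zpow_mono4 q hq0 m ((N:ℤ)) (3*m^2-m) ((N:ℤ)+3*m) 3 1 0 0 (by push_cast; ring)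
  have ey1 : q^((N:ℤ) + 3*m+1) = (q^(m:ℤ))^3 * (q^((N:ℤ)))^1 * ((q^(3*m^2-m))^0 * q^1) :=
    zpow_mono4 q hq0 m ((N:ℤ)) (3*m^2-m) ((N:ℤ)+3*m+1) 3 1 0 1 (by push_cast; ring)
  have ey2 : q^((N:ℤ) + 3*m+2) = (q^(m:ℤ))^3 * (q^((N:ℤ)))^1 * ((q^(3*m^2-m))^0 * q^2) :=
    zpow_mono4 q hq0 m ((N:ℤ)) (3*m^2-m) ((N:ℤ)+3*m+2) 3 1 0 2 (by push_cast; ring)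
  have ey3 : q^((N:ℤ) + 3*m+3) = (q^(m:ℤ))^3 * (q^((N:ℤ)))^1 * ((q^(3*m^2-m))^0 * q^3) :=
    zpow_mono4 q hq0 m ((N:ℤ)) (3*m^2-m) ((N:ℤ)+3*m+3) 3 1 0 3 (by push_cast; ring)
  have ez : q^(2*(N:ℤ) + 6*m+4) = (q^(m:ℤ))^6 * (q^((N:ℤ)))^2 * ((q^(3*m^2-m))^0 * q^4) :=
    zpow_mono4 q hq0 m ((N:ℤ)) (3*m^2-m) (2*(N:ℤ)+6*m+4) 6 2 0 4 (by push_cast; ring)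
  simp only [Gc]
  rw [show (N:ℤ) - 3*(m+1) = (N:ℤ)-3*m-3 by ring, show (N:ℤ) + 3*(m+1) = (N:ℤ)+3*m+3 by ring]
  rw [e1, e2, e2N, e2N2, eGm, eGm1, eNm, ey3]
  rw [ey1, ey2, ez] at pas
  rw [ey1] at ab0
  rw [ey2] at ab1
  rw [ey3] at ab2
  set A := q^(m:ℤ) with hA
  set B := q^((N:ℤ)) with hB
  set D := q^(3*m^2-m) with hD
  set V0 := Qb q (2*N) ((N:ℤ)-3*m) with hV0
  set V1 := Qb q (2*N) ((N:ℤ)-3*m-1) with hV1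
  set V2 := Qb q (2*N) ((N:ℤ)-3*m-2) with hV2
  linear_combination
    (D^2*(1-B^2)*(A^3 - q^2*A^9)) * pas
    + (D^2*(1 - q^2*B^2 - q^2*A^3*B + q^2*A^3*B^3 - q^2*A^6 + q^2*A^6*B^2)*A^3) * ab0
    + (D^2*(1 - q^2*B^2 - q^2*A^3*B + q^2*A^3*B^3 - q^2*A^6 + q^2*A^6*B^2)*V0) * r1
    + (D^2*(q*A^6*B^2 - q^3*A^6*B^2 - q^3*A^9*B + q^3*A^9*B^3)*q*A^3) * ab1
    + (D^2*(q*A^6*B^2 - q^3*A^6*B^2 - q^3*A^9*B + q^3*A^9*B^3)*V1) * r2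
    + (D^2*(-(q^2*A^9*B) + q^4*A^9*B^3)*q^2*A^3) * ab2
    + (D^2*(-(q^2*A^9*B) + q^4*A^9*B^3)*V2) * r3

lemma alpha_mul3 (q : ℂ) (t : ℕ) : baileyAlpha q (3*t) = 0 := by
  rw [baileyAlpha, if_pos (by omega)]

lemma alpha1 (q : ℂ) (t : ℕ) :
    baileyAlpha q (3*t+1) = q^(6*(t:ℤ)^2+(t:ℤ)) - q^(6*(t:ℤ)^2+7*(t:ℤ)+2) := by
  have h1 : (3*t+1) % 3 = 1 := by omega
  have h2 : (3*t+1) / 3 = t := by omega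
  rw [baileyAlpha, if_neg (by omega), if_pos h1, h2]
  rw [← zpow_natCast q (6*t^2+t), ← zpow_natCast q (6*t^2+7*t+2)]
  rw [show ((6*t^2+t : ℕ) : ℤ) = 6*(t:ℤ)^2+(t:ℤ) by push_cast; ring,
    show ((6*t^2+7*t+2 : ℕ) : ℤ) = 6*(t:ℤ)^2+7*(t:ℤ)+2 by push_cast; ring]

lemma alpha2 (q : ℂ) (t : ℕ) :
    baileyAlpha q (3*t+2) = q^(6*(-(t:ℤ)-1)^2+(-(t:ℤ)-1))
      - q^(6*(-(t:ℤ)-1)^2+7*(-(t:ℤ)-1)+2) := by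
  have h1 : (3*t+2) % 3 = 2 := by omega
  have h2 : (3*t+2+1) / 3 = t+1 := by omega
  rw [baileyAlpha, if_neg (by omega), if_neg (by omega), h2]
  have hle1 : (t+1) ≤ 6*(t+1)^2 := by nlinarith
  have hle2 : 7*(t+1) ≤ 6*(t+1)^2+2 := by nlinarith
  rw [← zpow_natCast q (6*(t+1)^2 - (t+1)), ← zpow_natCast q (6*(t+1)^2+2-7*(t+1))]
  rw [show ((6*(t+1)^2 - (t+1) : ℕ) : ℤ) = 6*(-(t:ℤ)-1)^2+(-(t:ℤ)-1) by
      rw [Nat.cast_sub hle1]; push_cast; ring,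
    show ((6*(t+1)^2+2-7*(t+1) : ℕ) : ℤ) = 6*(-(t:ℤ)-1)^2+7*(-(t:ℤ)-1)+2 by
      rw [Nat.cast_sub hle2]; push_cast; ring]

lemma Gc_hi (q : ℂ) (N : ℕ) : Gc q N ((((N+3)/3 : ℕ)) : ℤ) = 0 := by
  rw [Gc, Qb_of_neg q (2*N) (by omega)]
  ring

lemma Gc_lo (q : ℂ) (N : ℕ) : Gc q N (-(((N+2)/3 : ℕ) : ℤ)) = 0 := by
  rcases (by omega : N % 3 = 0 ∨ N % 3 = 1 ∨ N % 3 = 2) with h3 | h3 | h3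
  · rw [Gc, show (N:ℤ) + 3*(-(((N+2)/3 : ℕ) : ℤ)) = 0 by omega, zpow_zero]
    ring
  · rw [Gc, Qb_of_gt q (2*N) (by omega)]
    ring
  · rw [Gc, Qb_of_gt q (2*N) (by omega)]
    ring

lemma tele (q : ℂ) (hq0 : q ≠ 0) (hq1 : ‖q‖ < 1) (N : ℕ) (K : ℕ) :
    ∑ k ∈ Finset.range (K+1), baileyAlpha q k *
        ((1 - q^(2*N)) * Qb q (2*N+2) ((N:ℤ)+1-k) - (1 - q^(2*N+2)) * Qb q (2*N) ((N:ℤ)-k))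
    = Gc q N (-(((K+1)/3 : ℕ) : ℤ)) - Gc q N (((K+2)/3 : ℕ) : ℤ) := by
  induction K with
  | zero =>
    rw [show ((0+1)/3 : ℕ) = 0 by norm_num,
      Finset.sum_range_one, show baileyAlpha q 0 = 0 by rw [baileyAlpha]; norm_num,
      Nat.cast_zero, neg_zero, sub_self]
    ring
  | succ K ih =>
    rw [Finset.sum_range_succ, ih]
    set t := (K+1)/3 with ht
    rcases (by omega : (K+1) % 3 = 0 ∨ (K+1) % 3 = 1 ∨ (K+1) % 3 = 2) with h3 | h3 | h3
    · have hK : K+1 = 3*t := by omega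
      rw [show (K+1+1)/3 = t by omega, show (K+1+2)/3 = t by omega, hK, alpha_mul3 q t]
      ring
    · have hK : K+1 = 3*t+1 := by omega
      rw [show (K+1+1)/3 = t by omega, show (K+1+2)/3 = t+1 by omega, hK, alpha1 q t]
      rw [show ((N:ℤ)+1-((3*t+1:ℕ):ℤ)) = (N:ℤ)-3*(t:ℤ) by push_cast; ring,
        show ((N:ℤ)-((3*t+1:ℕ):ℤ)) = (N:ℤ)-3*(t:ℤ)-1 by push_cast; ring,
        show ((t+1:ℕ):ℤ) = (t:ℤ)+1 by push_cast; ring]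
      have hc := cert q hq0 hq1 N (t:ℤ)
      rw [show (6*(t:ℤ)^2+(t:ℤ)) = 6*(t:ℤ)^2+(t:ℤ) from rfl] at hc
      linear_combination hc
    · have hK : K+1 = 3*t+2 := by omega
      rw [show (K+1+1)/3 = t+1 by omega, show (K+1+2)/3 = t+1 by omega, hK, alpha2 q t]
      have s1 : Qb q (2*N+2) ((N:ℤ) - 3*(-(t:ℤ)-1))
          = Qb q (2*N+2) ((N:ℤ)+1-((3*t+2:ℕ):ℤ)) := by
        rw [show (N:ℤ) - 3*(-(t:ℤ)-1)
            = ((2*N+2:ℕ):ℤ) - ((N:ℤ)+1-((3*t+2:ℕ):ℤ)) by push_cast; ring, Qb_symm]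
      have s2 : Qb q (2*N) ((N:ℤ) - 3*(-(t:ℤ)-1) - 1)
          = Qb q (2*N) ((N:ℤ)-((3*t+2:ℕ):ℤ)) := by
        rw [show (N:ℤ) - 3*(-(t:ℤ)-1) - 1
            = ((2*N:ℕ):ℤ) - ((N:ℤ)-((3*t+2:ℕ):ℤ)) by push_cast; ring, Qb_symm]
      rw [← s1, ← s2, show ((t+1:ℕ):ℤ) = (t:ℤ)+1 by push_cast; ring]
      have hc := cert q hq0 hq1 N (-(t:ℤ)-1)
      rw [show (-(t:ℤ)-1+1) = -(t:ℤ) by ring] at hc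
      rw [show (-((t:ℤ)+1)) = -(t:ℤ)-1 by ring]
      linear_combination hc

lemma Tval (q : ℂ) (hq0 : q ≠ 0) (hq1 : ‖q‖ < 1) :
    ∀ N : ℕ, 1 ≤ N →
      (∑ k ∈ Finset.range (N+1), baileyAlpha q k * Qb q (2*N) ((N:ℤ) - k)) = 1 - q^(2*N) := by
  intro N hN
  induction N, hN using Nat.le_induction with
  | base =>
    rw [Finset.sum_range_succ, Finset.sum_range_one,
      show baileyAlpha q 0 = 0 by rw [baileyAlpha]; norm_num,
      show baileyAlpha q 1 = 1 - q^2 by rw [baileyAlpha]; norm_num]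
    norm_num
    rw [Qb_zero q hq1 2]
    ring
  | succ N hN ih =>
    have tel := tele q hq0 hq1 N (N+1)
    rw [show N+1+1 = N+2 from rfl, show N+1+2 = N+3 from rfl, Gc_lo q N, Gc_hi q N,
      sub_self] at tel
    have expand : (∑ k ∈ Finset.range (N+2), baileyAlpha q k *
        ((1 - q^(2*N)) * Qb q (2*N+2) ((N:ℤ)+1-k) - (1 - q^(2*N+2)) * Qb q (2*N) ((N:ℤ)-k)))
        = (1-q^(2*N)) * (∑ k ∈ Finset.range (N+2),
              baileyAlpha q k * Qb q (2*N+2) ((N:ℤ)+1-k))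
          - (1-q^(2*N+2)) * (∑ k ∈ Finset.range (N+2),
              baileyAlpha q k * Qb q (2*N) ((N:ℤ)-k)) := by
      rw [Finset.mul_sum, Finset.mul_sum, ← Finset.sum_sub_distrib]
      exact Finset.sum_congr rfl (fun k _ => by ring)
    rw [expand] at tel
    have hS2 : (∑ k ∈ Finset.range (N+2), baileyAlpha q k * Qb q (2*N) ((N:ℤ)-k))
        = 1 - q^(2*N) := by
      rw [Finset.sum_range_succ, ih, Qb_of_neg q (2*N) (by push_cast; omega)]
      ring
    rw [hS2] at tel
    have hgoal : (∑ k ∈ Finset.range (N+1+1),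
          baileyAlpha q k * Qb q (2*(N+1)) (((N+1:ℕ):ℤ) - k))
        = ∑ k ∈ Finset.range (N+2), baileyAlpha q k * Qb q (2*N+2) ((N:ℤ)+1-k) := by
      refine Finset.sum_congr rfl (fun k _ => ?_)
      rw [show 2*(N+1) = 2*N+2 by ring,
        show (((N+1:ℕ)):ℤ) - (k:ℤ) = (N:ℤ)+1-k by push_cast; ring]
    rw [hgoal]
    have hne : (1:ℂ) - q^(2*N) ≠ 0 := one_sub_pow_ne q hq1 (by omega)
    have hmain : (1-q^(2*N)) * (∑ k ∈ Finset.range (N+2),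
          baileyAlpha q k * Qb q (2*N+2) ((N:ℤ)+1-k))
        = (1-q^(2*N)) * (1 - q^(2*(N+1))) := by
      rw [show 2*(N+1) = 2*N+2 by ring]
      linear_combination tel
    exact mul_left_cancel₀ hne hmain

end BaileyAux

/-- `(α, β)` is a Bailey pair relative to `(1, q)`:
`β_N = ∑_{k=0}^{N} α_k / ((q;q)_{N−k} (q;q)_{N+k})` for all `N ≥ 0`. -/
theorem bailey_pair (q : ℂ) (hq0 : 0 < ‖q‖) (hq1 : ‖q‖ < 1)
    (N : ℕ) :
    baileyBeta q N =
      ∑ k ∈ Finset.range (N + 1),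
        baileyAlpha q k / (pochN q q (N - k) * pochN q q (N + k)) := by
  have hq0' : q ≠ 0 := norm_pos_iff.mp hq0
  open BaileyAux in
  match N with
  | 0 => simp [baileyBeta, baileyAlpha, Finset.sum_range_one]
  | (M+1) =>
    have hT := BaileyAux.Tval q hq0' hq1 (M+1) (by omega)
    have hterm : ∀ k ∈ Finset.range (M+1+1),
        baileyAlpha q k / (pochN q q (M+1-k) * pochN q q (M+1+k))
        = baileyAlpha q k * BaileyAux.Qb q (2*(M+1)) (((M+1:ℕ):ℤ) - k)
            / BaileyAux.P q (2*(M+1)) := by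
      intro k hk
      have hkle : k ≤ M+1 := by
        have := Finset.mem_range.mp hk; omega
      rw [show (((M+1:ℕ)):ℤ) - (k:ℤ) = (((M+1-k : ℕ)):ℤ) by omega,
        BaileyAux.Qb_natCast q (2*(M+1)) (M+1-k) (by omega),
        show 2*(M+1) - (M+1-k) = M+1+k by omega]
      have n1 := BaileyAux.P_ne q hq1 (2*(M+1))
      have n2 := BaileyAux.P_ne q hq1 (M+1-k)
      have n3 := BaileyAux.P_ne q hq1 (M+1+k)
      rw [show BaileyAux.P q (M+1-k) = pochN q q (M+1-k) from rfl] at n2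
      rw [show BaileyAux.P q (M+1+k) = pochN q q (M+1+k) from rfl] at n3
      rw [show pochN q q (M+1-k) = BaileyAux.P q (M+1-k) from rfl,
        show pochN q q (M+1+k) = BaileyAux.P q (M+1+k) from rfl]
      set X := BaileyAux.P q (M+1-k) with hX
      set Y := BaileyAux.P q (M+1+k) with hY
      set Z := BaileyAux.P q (2*(M+1)) with hZ
      have nX : X ≠ 0 := n2
      have nY : Y ≠ 0 := n3
      field_simp
    rw [Finset.sum_congr rfl hterm, ← Finset.sum_div, hT]
    have hP : BaileyAux.P q (2*(M+1)) = BaileyAux.P q (2*(M+1)-1) * (1 - q^(2*(M+1))) := by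
      conv_lhs => rw [show 2*(M+1) = (2*(M+1)-1)+1 by omega, BaileyAux.P_succ,
        show 2*(M+1)-1+1 = 2*(M+1) by omega]
    rw [hP, show baileyBeta q (M+1) = 1 / pochN q q (2*(M+1)-1) from rfl,
      show pochN q q (2*(M+1)-1) = BaileyAux.P q (2*(M+1)-1) from rfl]
    have h1 := BaileyAux.P_ne q hq1 (2*(M+1)-1)
    have h2 := BaileyAux.one_sub_pow_ne q hq1 (show 1 ≤ 2*(M+1) by omega)
    field_simp
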